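/- Let C ⊆ ℝ^m be a compact convex set symmetric about the origin, let n > 0, c > 0, ν ≥ 0, and let y ∈ n·C. Let F : ℝ^m → ℝ^m be a measurable map such that for every w ∈ ℝ^m, F(w) ∈ n·C and ‖(y + w) − F(w)‖₂² ≤ inf_{q ∈ n·C} ‖(y + w) − q‖₂² + ν. Then E_{w} ‖F(w) − y‖₂² ≤ 4 c n · ℓ*(C) + ν, where w is distributed according to the product Gaussian measure N(0, c²)^m on ℝ^m. -/

import Mathlib

open Finset MeasureTheory ProbabilityTheory
open scoped Pointwise
open scoped NNReal ENNReal

lemma aux_int_abs_gaussian (V : ℝ≥0) (hV : V ≠ 0) :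
    Integrable (fun x : ℝ => |x|) (gaussianReal 0 V) := by
  rw [gaussianReal_of_var_ne_zero 0 hV,
    integrable_withDensity_iff (measurable_gaussianPDF 0 V)
      (ae_of_all _ fun x => ENNReal.ofReal_lt_top)]
  have hVpos : (0:ℝ) < V := by positivity
  have hb : (0:ℝ) < (2 * (V:ℝ))⁻¹ := by positivity
  refine (((integrable_mul_exp_neg_mul_sq hb).abs).const_mul
    ((Real.sqrt (2 * Real.pi * V))⁻¹)).congr (ae_of_all _ fun x => ?_)
  simp only [gaussianPDF_def]
  rw [ENNReal.toReal_ofReal (gaussianPDFReal_nonneg 0 V x),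
    gaussianPDFReal_def, abs_mul, abs_of_pos (Real.exp_pos _),
    show -(2*(V:ℝ))⁻¹ * x^2 = -(x-0)^2/(2*(V:ℝ)) by ring]
  ring

lemma aux_pi_map_eval {m : ℕ} (μ : Fin m → Measure ℝ) [∀ i, IsProbabilityMeasure (μ i)]
    (i : Fin m) : (Measure.pi μ).map (Function.eval i) = μ i := by
  ext s hs
  rw [Measure.map_apply (measurable_pi_apply i) hs, Set.eval_preimage, Measure.pi_pi]
  rw [Finset.prod_eq_single i (fun j _ hj => by simp [Function.update_of_ne hj])
    (by simp)]
  simp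

/-- Let `C ⊆ ℝ^m` be compact convex symmetric, `n, c > 0`, `ν ≥ 0`,
`y ∈ n·C`, and let `F` be a measurable map such that for every `w`, `F(w) ∈ n·C` is a
`ν`-approximate Euclidean projection of `y + w` onto `n·C`. Then
`E_{w ∼ N(0,c²)^m} ‖F(w) − y‖₂² ≤ 4cn·ℓ*(C) + ν`, where
`ℓ*(C) = E_{g ∼ N(0,1)^m} sup_{v ∈ C} ⟨g, v⟩`. -/
theorem stmt_15 {m : ℕ} (C : Set (Fin m → ℝ))
    (hcomp : IsCompact C) (hconv : Convex ℝ C) (hsym : C = -C)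
    (n c ν : ℝ) (hn : 0 < n) (hc : 0 < c) (hν : 0 ≤ ν)
    (y : Fin m → ℝ) (hy : y ∈ n • C)
    (F : (Fin m → ℝ) → (Fin m → ℝ)) (hFmeas : Measurable F)
    (hF : ∀ w : Fin m → ℝ, F w ∈ n • C ∧
      ∑ i, ((y + w) i - F w i) ^ 2 ≤
        sInf ((fun q => ∑ i, ((y + w) i - q i) ^ 2) '' (n • C)) + ν) :
    (∫ w : Fin m → ℝ, (∑ i, (F w i - y i) ^ 2)
        ∂(Measure.pi fun _ : Fin m => gaussianReal 0 (Real.toNNReal (c ^ 2)))) ≤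
      4 * c * n *
        (∫ g : Fin m → ℝ, sSup ((fun v => ∑ i, g i * v i) '' C)
          ∂(Measure.pi fun _ : Fin m => gaussianReal 0 1)) + ν := by
  set S : (Fin m → ℝ) → ℝ := fun w => sSup ((fun v => ∑ i, w i * v i) '' C) with hSdef
  set μc : Measure (Fin m → ℝ) :=
    Measure.pi fun _ : Fin m => gaussianReal 0 (Real.toNNReal (c ^ 2)) with hμc
  set μ1 : Measure (Fin m → ℝ) := Measure.pi fun _ : Fin m => gaussianReal 0 1 with hμ1
  obtain ⟨b, hbC, hyb⟩ := hy
  -- a uniform bound on C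
  obtain ⟨R, hRball⟩ := hcomp.isBounded.subset_closedBall 0
  have hR0 : 0 ≤ R := dist_nonneg.trans (hRball hbC)
  have hRC : ∀ v ∈ C, ∀ i, |v i| ≤ R := by
    intro v hv i
    have h1 : dist v 0 ≤ R := hRball hv
    have h2 : dist (v i) ((0 : Fin m → ℝ) i) ≤ dist v 0 := dist_le_pi_dist v 0 i
    simpa [Real.dist_eq] using h2.trans h1
  -- basic facts about S
  have hlin : ∀ w : Fin m → ℝ, Continuous fun v : Fin m → ℝ => ∑ i, w i * v i := by
    intro w
    exact continuous_finset_sum _ fun i _ => continuous_const.mul (continuous_apply i)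
  have hbddA : ∀ w : Fin m → ℝ, BddAbove ((fun v => ∑ i, w i * v i) '' C) := by
    intro w
    exact (hcomp.image (hlin w)).bddAbove
  have hneA : ∀ w : Fin m → ℝ, ((fun v => ∑ i, w i * v i) '' C).Nonempty :=
    fun w => ⟨_, Set.mem_image_of_mem _ hbC⟩
  have hSub : ∀ w w' : Fin m → ℝ, S w ≤ S w' + ∑ i, |w i - w' i| * R := by
    intro w w'
    refine csSup_le (hneA w) ?_
    rintro r ⟨v, hv, rfl⟩
    have h1 : ∑ i, w i * v i = ∑ i, w' i * v i + ∑ i, (w i - w' i) * v i := by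
      rw [← Finset.sum_add_distrib]; exact Finset.sum_congr rfl fun i _ => by ring
    have h2 : ∑ i, w' i * v i ≤ S w' := le_csSup (hbddA w') (Set.mem_image_of_mem _ hv)
    have h3 : ∑ i, (w i - w' i) * v i ≤ ∑ i, |w i - w' i| * R := by
      refine Finset.sum_le_sum fun i _ => ?_
      calc (w i - w' i) * v i ≤ |(w i - w' i) * v i| := le_abs_self _
        _ = |w i - w' i| * |v i| := abs_mul _ _
        _ ≤ |w i - w' i| * R := mul_le_mul_of_nonneg_left (hRC v hv i) (abs_nonneg _)
    linarith
  have hScont : Continuous S := by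
    have : LipschitzWith (Real.toNNReal (m * R)) S := by
      refine LipschitzWith.of_dist_le_mul fun w w' => ?_
      have hsum : ∀ w w' : Fin m → ℝ, ∑ i, |w i - w' i| * R ≤ m * R * dist w w' := by
        intro w w'
        calc ∑ i, |w i - w' i| * R ≤ ∑ _i : Fin m, dist w w' * R := by
              refine Finset.sum_le_sum fun i _ => ?_
              refine mul_le_mul_of_nonneg_right ?_ hR0
              have := dist_le_pi_dist w w' i
              simpa [Real.dist_eq] using this
          _ = m * R * dist w w' := by
              rw [Finset.sum_const, Finset.card_univ, Fintype.card_fin, nsmul_eq_mul]; ring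
      have h1 : S w ≤ S w' + ↑m * R * dist w w' :=
        (hSub w w').trans (add_le_add_right (hsum w w') _)
      have h2 : S w' ≤ S w + ↑m * R * dist w w' := by
        have := (hSub w' w).trans (add_le_add_right (hsum w' w) _)
        rwa [dist_comm w' w] at this
      rw [Real.dist_eq, Real.coe_toNNReal _ (by positivity)]
      rw [abs_le]
      constructor <;> linarith
    exact this.continuous
  -- pointwise key inequality
  have key : ∀ w : Fin m → ℝ, ∑ i, (F w i - y i) ^ 2 ≤ 4 * n * S w + ν := by
    intro w
    obtain ⟨⟨a, haC, hFa⟩, hineq⟩ := hF w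
    have hnegb : -b ∈ C := by rw [hsym]; exact Set.neg_mem_neg.mpr hbC
    have hvC : (1/2 : ℝ) • a + (1/2 : ℝ) • (-b) ∈ C :=
      hconv haC hnegb (by norm_num) (by norm_num) (by norm_num)
    set vm : Fin m → ℝ := (1/2 : ℝ) • a + (1/2 : ℝ) • (-b) with hvm
    have hd : ∀ i, F w i - y i = 2 * n * vm i := by
      intro i
      rw [← hFa, ← hyb]
      simp only [hvm, Pi.add_apply, Pi.smul_apply, Pi.neg_apply, smul_eq_mul]
      ring
    have step1 : ∑ i, ((y + w) i - F w i) ^ 2 ≤ ∑ i, (w i) ^ 2 + ν := by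
      refine hineq.trans (add_le_add_left ?_ ν)
      refine csInf_le ⟨0, ?_⟩ ⟨y, ⟨b, hbC, hyb⟩, ?_⟩
      · rintro r ⟨q, _, rfl⟩
        exact Finset.sum_nonneg fun i _ => sq_nonneg _
      · refine Finset.sum_congr rfl fun i _ => ?_
        simp [Pi.add_apply]
    have hexp : ∑ i, ((y + w) i - F w i) ^ 2 =
        ∑ i, (w i) ^ 2 - 2 * ∑ i, w i * (F w i - y i) + ∑ i, (F w i - y i) ^ 2 := by
      rw [Finset.mul_sum, ← Finset.sum_sub_distrib, ← Finset.sum_add_distrib]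
      refine Finset.sum_congr rfl fun i _ => ?_
      simp only [Pi.add_apply]
      ring
    have step3 : ∑ i, w i * (F w i - y i) = 2 * n * ∑ i, w i * vm i := by
      rw [Finset.mul_sum]
      exact Finset.sum_congr rfl fun i _ => by rw [hd i]; ring
    have step4 : ∑ i, w i * vm i ≤ S w := le_csSup (hbddA w) (Set.mem_image_of_mem _ hvC)
    have h4 : 2 * n * ∑ i, w i * vm i ≤ 2 * n * S w :=
      mul_le_mul_of_nonneg_left step4 (by positivity)
    linarith
  -- integrability of the LHS integrand
  have hfmeas : Measurable fun w => ∑ i, (F w i - y i) ^ 2 := by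
    refine Finset.measurable_sum _ fun i _ => ?_
    exact (((measurable_pi_apply i).comp hFmeas).sub measurable_const).pow_const 2
  have hfbd : ∀ w, ‖∑ i, (F w i - y i) ^ 2‖ ≤ m * (2 * n * R) ^ 2 := by
    intro w
    obtain ⟨⟨a, haC, hFa⟩, -⟩ := hF w
    have habs : ∀ i, |F w i - y i| ≤ 2 * n * R := by
      intro i
      rw [← hFa, ← hyb]
      simp only [Pi.smul_apply, smul_eq_mul]
      calc |n * a i - n * b i| ≤ |n * a i| + |n * b i| := by
            rw [sub_eq_add_neg]
            simpa [abs_neg] using abs_add_le (n * a i) (-(n * b i))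
        _ = n * |a i| + n * |b i| := by rw [abs_mul, abs_mul, abs_of_pos hn]
        _ ≤ n * R + n * R :=
            add_le_add (mul_le_mul_of_nonneg_left (hRC a haC i) hn.le)
              (mul_le_mul_of_nonneg_left (hRC b hbC i) hn.le)
        _ = 2 * n * R := by ring
    rw [Real.norm_eq_abs, abs_of_nonneg (Finset.sum_nonneg fun i _ => sq_nonneg _)]
    calc ∑ i, (F w i - y i) ^ 2 ≤ ∑ _i : Fin m, (2 * n * R) ^ 2 := by
          refine Finset.sum_le_sum fun i _ => ?_
          have h := habs i
          have h' := abs_nonneg (F w i - y i)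
          nlinarith [sq_abs (F w i - y i)]
      _ = m * (2 * n * R) ^ 2 := by
          rw [Finset.sum_const, Finset.card_univ, Fintype.card_fin, nsmul_eq_mul]
  
  have hfint : Integrable (fun w => ∑ i, (F w i - y i) ^ 2) μc :=
    ⟨hfmeas.aestronglyMeasurable, HasFiniteIntegral.of_bounded (ae_of_all _ hfbd)⟩
  have hS0 : S 0 = 0 := by
    have hle : S 0 ≤ 0 := csSup_le (hneA 0) (by rintro r ⟨v, hv, rfl⟩; simp)
    have hge : (0:ℝ) ≤ S 0 := by
      have h := le_csSup (hbddA 0) (Set.mem_image_of_mem _ hbC)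
      refine le_trans (le_of_eq ?_) h
      simp
    linarith
  have hSbd : ∀ w, ‖S w‖ ≤ ∑ i, |w i| * R := by
    intro w
    have h1 := hSub w 0
    have h2 := hSub 0 w
    simp only [Pi.zero_apply, sub_zero, zero_sub, abs_neg, hS0] at h1 h2
    rw [Real.norm_eq_abs, abs_le]
    constructor <;> linarith
  have hevint : ∀ i : Fin m, Integrable (fun w : Fin m → ℝ => |w i|) μc := by
    intro i
    have habs : Integrable (fun x : ℝ => |x|) (gaussianReal 0 (Real.toNNReal (c ^ 2))) :=
      aux_int_abs_gaussian _ (by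
        simp only [ne_eq, Real.toNNReal_eq_zero, not_le]
        positivity)
    rw [← aux_pi_map_eval (fun _ : Fin m => gaussianReal 0 (Real.toNNReal (c ^ 2))) i] at habs
    exact (integrable_map_measure continuous_abs.aestronglyMeasurable
      (measurable_pi_apply i).aemeasurable).mp habs
  have hGint : Integrable (fun w : Fin m → ℝ => ∑ i, |w i| * R) μc :=
    integrable_finset_sum _ fun i _ => (hevint i).mul_const R
  have hSint : Integrable S μc :=
    hGint.mono' hScont.aestronglyMeasurable (ae_of_all _ hSbd)
  have hmp : MeasurePreserving (fun (g : Fin m → ℝ) (i : Fin m) => c * g i) μ1 μc := by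
    refine measurePreserving_pi _ _ fun i => ⟨measurable_id.const_mul c, ?_⟩
    have h2 : gaussianReal (c * 0) (⟨c ^ 2, sq_nonneg c⟩ * 1) =
        gaussianReal 0 (Real.toNNReal (c ^ 2)) := by
      rw [mul_zero]; congr 1
      exact (mul_one _).trans (Real.toNNReal_of_nonneg (sq_nonneg c)).symm
    exact (gaussianReal_map_const_mul c).trans h2
  have hscale : ∀ g : Fin m → ℝ, S (fun i => c * g i) = c * S g := by
    intro g
    have himg : (fun v : Fin m → ℝ => ∑ i, c * g i * v i) '' C
        = (fun x => c * x) '' ((fun v : Fin m → ℝ => ∑ i, g i * v i) '' C) := by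
      rw [Set.image_image]
      exact Set.image_congr' fun v => by
        rw [Finset.mul_sum]
        exact Finset.sum_congr rfl fun i _ => mul_assoc _ _ _
    have hmono := Monotone.map_csSup_of_continuousAt (f := fun x : ℝ => c * x)
      ((continuous_mul_left c).continuousAt)
      (fun a b' hab => mul_le_mul_of_nonneg_left hab hc.le) (hneA g) (hbddA g)
    simp only [hSdef]
    rw [himg]
    exact hmono.symm
  have hintc : ∫ w, S w ∂μc = c * ∫ g, S g ∂μ1 := by
    rw [← hmp.map_eq, integral_map hmp.measurable.aemeasurable hScont.aestronglyMeasurable]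
    simp only [hscale]
    exact integral_const_mul c _
  calc (∫ w, (∑ i, (F w i - y i) ^ 2) ∂μc)
      ≤ ∫ w, (4 * n * S w + ν) ∂μc :=
        integral_mono hfint ((hSint.const_mul (4 * n)).add (integrable_const ν)) key
    _ = 4 * n * (∫ w, S w ∂μc) + ν := by
        rw [integral_add (hSint.const_mul (4 * n)) (integrable_const ν),
          integral_const_mul, integral_const]
        simp [measure_univ]
    _ = 4 * c * n * (∫ g, S g ∂μ1) + ν := by rw [hintc]; ring
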